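/- Let f : ℝⁿ → ℝ be convex with minimizer x_* and sharp growth f(x) ≥ f(x_*) + α‖x − x_*‖ for all x, with α > 0, and let ρ > 0. If x⁺ = prox_{ρ,f}(x) and x⁺ ≠ x_*, then f(x⁺) ≤ f(x) − ‖x⁺ − x‖²/ρ and ‖x⁺ − x‖ ≥ ρα; hence f(x⁺) ≤ f(x) − ρα². -/

import Mathlib

open scoped RealInnerProductSpace

noncomputable section

/-- `y` is the prox point `prox_{ρ,f}(x)`, i.e. it minimizes `z ↦ f z + (1/(2ρ))‖z - x‖²`. -/
def IsProx {n : ℕ} (ρ : ℝ) (f : EuclideanSpace ℝ (Fin n) → ℝ)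
    (x y : EuclideanSpace ℝ (Fin n)) : Prop :=
  ∀ z, f y + (1 / (2 * ρ)) * ‖y - x‖ ^ 2 ≤ f z + (1 / (2 * ρ)) * ‖z - x‖ ^ 2

/-- Subgradient inequality for the prox point: `(x - y)/ρ ∈ ∂f(y)`. -/
lemma prox_subgrad {n : ℕ} {ρ : ℝ} {f : EuclideanSpace ℝ (Fin n) → ℝ}
    {x y : EuclideanSpace ℝ (Fin n)}
    (hconv : ConvexOn ℝ Set.univ f) (hρ : 0 < ρ) (hprox : IsProx ρ f x y)
    (z : EuclideanSpace ℝ (Fin n)) :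
    f y + ⟪x - y, z - y⟫ / ρ ≤ f z := by
  have key : ∀ t : ℝ, 0 < t → t ≤ 1 →
      f y + ⟪x - y, z - y⟫ / ρ ≤ f z + t * ‖z - y‖ ^ 2 / (2 * ρ) := by
    intro t ht ht1
    have h1 := hprox ((1 - t) • y + t • z)
    have h2 : f ((1 - t) • y + t • z) ≤ (1 - t) * f y + t * f z :=
      hconv.2 (Set.mem_univ y) (Set.mem_univ z) (by linarith) (le_of_lt ht) (by ring)
    have h3 : (1 - t) • y + t • z - x = (y - x) + t • (z - y) := by module
    have h4 : ‖(1 - t) • y + t • z - x‖ ^ 2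
        = ‖y - x‖ ^ 2 + 2 * (t * ⟪y - x, z - y⟫) + t ^ 2 * ‖z - y‖ ^ 2 := by
      rw [h3, norm_add_sq_real, real_inner_smul_right, norm_smul]
      simp [abs_of_pos ht]
      ring
    have hinner : ⟪y - x, z - y⟫ = - ⟪x - y, z - y⟫ := by
      rw [← inner_neg_left]; congr 1; abel
    rw [h4, hinner] at h1
    have hρ' : (0 : ℝ) < 2 * ρ := by linarith
    have e : ∀ a p : ℝ, (2 * ρ) * (a + 1 / (2 * ρ) * p) = 2 * ρ * a + p := by
      intro a p; field_simp
    have h1' := mul_le_mul_of_nonneg_left h1 (le_of_lt hρ')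
    rw [e, e] at h1'
    have hB2 := mul_le_mul_of_nonneg_left h2 (le_of_lt hρ')
    have goal' : (2 * ρ * t) * (f y + ⟪x - y, z - y⟫ / ρ)
        ≤ (2 * ρ * t) * (f z + t * ‖z - y‖ ^ 2 / (2 * ρ)) := by
      have lhs_eq : (2 * ρ * t) * (f y + ⟪x - y, z - y⟫ / ρ)
          = t * (2 * ρ * f y) + 2 * t * ⟪x - y, z - y⟫ := by
        field_simp
      have rhs_eq : (2 * ρ * t) * (f z + t * ‖z - y‖ ^ 2 / (2 * ρ))
          = t * (2 * ρ * f z) + t ^ 2 * ‖z - y‖ ^ 2 := by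
        field_simp
      rw [lhs_eq, rhs_eq]
      nlinarith [h1', hB2]
    exact le_of_mul_le_mul_left goal' (by positivity)
  have hlim : ∀ ε : ℝ, 0 < ε → f y + ⟪x - y, z - y⟫ / ρ ≤ f z + ε := by
    intro ε hε
    set N : ℝ := ‖z - y‖ ^ 2 with hNdef
    have hN : 0 ≤ N := by positivity
    set t : ℝ := min 1 (2 * ρ * ε / (N + 1)) with htdef
    have ht : 0 < t := lt_min one_pos (by positivity)
    have ht1 : t ≤ 1 := min_le_left _ _
    have hk := key t ht ht1
    have hbound : t * N / (2 * ρ) ≤ ε := by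
      have h7 : t ≤ 2 * ρ * ε / (N + 1) := min_le_right _ _
      have h8 : t * N / (2 * ρ) ≤ (2 * ρ * ε / (N + 1)) * N / (2 * ρ) := by
        gcongr
      have h9 : (2 * ρ * ε / (N + 1)) * N / (2 * ρ) = ε * N / (N + 1) := by
        field_simp
      have h10 : ε * N / (N + 1) ≤ ε := by
        rw [div_le_iff₀ (by positivity)]; nlinarith
      linarith [h8, h9 ▸ h8]
    linarith
  exact le_of_forall_pos_le_add hlim

/-- under sharp growth, a prox step not landing on the minimizer decreases the
objective by at least ρα². -/
theorem prox_step_decrease {n : ℕ} (f : EuclideanSpace ℝ (Fin n) → ℝ) (ρ α : ℝ)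
    (xs x y : EuclideanSpace ℝ (Fin n))
    (hconv : ConvexOn ℝ Set.univ f)
    (hmin : ∀ z, f xs ≤ f z)
    (hα : 0 < α)
    (hsharp : ∀ z, f xs + α * ‖z - xs‖ ≤ f z)
    (hρ : 0 < ρ)
    (hprox : IsProx ρ f x y)
    (hne : y ≠ xs) :
    f y ≤ f x - ‖y - x‖ ^ 2 / ρ ∧ ρ * α ≤ ‖y - x‖ ∧ f y ≤ f x - ρ * α ^ 2 := by
  have hsub := fun z => prox_subgrad hconv hρ hprox z
  have hnorm : ‖x - y‖ = ‖y - x‖ := norm_sub_rev _ _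
  have h1 : f y ≤ f x - ‖y - x‖ ^ 2 / ρ := by
    have := hsub x
    rw [real_inner_self_eq_norm_sq, hnorm] at this
    linarith
  have h2 : ρ * α ≤ ‖y - x‖ := by
    have ha := hsub xs
    have hb := hsharp y
    have hcs : ⟪x - y, y - xs⟫ ≤ ‖x - y‖ * ‖y - xs‖ := real_inner_le_norm _ _
    have hflip : ⟪x - y, xs - y⟫ = - ⟪x - y, y - xs⟫ := by
      rw [← inner_neg_right]; congr 1; abel
    rw [hflip] at ha
    have hpos : 0 < ‖y - xs‖ := norm_pos_iff.mpr (sub_ne_zero.mpr hne)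
    -- from ha and hb: α‖y−xs‖ ≤ ⟪x−y,y−xs⟫/ρ ≤ ‖x−y‖‖y−xs‖/ρ
    rw [neg_div] at ha
    have h11 : α * ‖y - xs‖ ≤ ⟪x - y, y - xs⟫ / ρ := by linarith
    have h12 : ⟪x - y, y - xs⟫ / ρ ≤ ‖x - y‖ * ‖y - xs‖ / ρ := by
      gcongr
    have h13 : α * ‖y - xs‖ * ρ ≤ ‖x - y‖ * ‖y - xs‖ :=
      (le_div_iff₀ hρ).mp (h11.trans h12)
    rw [← hnorm]
    nlinarith
  refine ⟨h1, h2, ?_⟩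
  have hsq : ρ * α ^ 2 ≤ ‖y - x‖ ^ 2 / ρ := by
    rw [le_div_iff₀ hρ]
    nlinarith [mul_self_le_mul_self (by positivity : (0:ℝ) ≤ ρ * α) h2]
  linarith
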